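/- Let F be the free group on generators a, b, H = ⟨a⟩, and for m ≥ 1 define W_m = {w ∈ F \ H : initial a-exponent of w has absolute value < m}, and V_m = (F \ H) \ (W_m ∪ W_m⁻¹). Then for all g₁, g₂ ∈ F \ H there exists m₁ such that for every m > m₁, g₁V_m ∩ V_m g₂ = ∅. -/

import Mathlib

/-- The initial `a`-exponent of a reduced word in the free group on `Bool`,
where `a = FreeGroup.of true`: the signed length of the maximal initial run of
`a`-letters in the reduced word. -/
def initExp (w : FreeGroup Bool) : ℤ :=
  ((w.toWord.takeWhile (fun p => p.1)).map (fun p => if p.2 then (1 : ℤ) else -1)).sum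

/-- `W m`: elements of `F \ ⟨a⟩` whose maximal initial `a`-power `aᵏ` has `|k| < m`. -/
def Wm (m : ℕ) : Set (FreeGroup Bool) :=
  {w | w ∉ Subgroup.zpowers (FreeGroup.of true) ∧ |initExp w| < (m : ℤ)}

/-- `V m = (F \ H) \ (W m ∪ (W m)⁻¹)`. -/
def Vm (m : ℕ) : Set (FreeGroup Bool) :=
  {w | w ∉ Subgroup.zpowers (FreeGroup.of true)} \ (Wm m ∪ (Wm m)⁻¹)

open FreeGroup List


/-- relation: no cancelling pair -/
abbrev NR (x y : Bool × Bool) : Prop := ¬(x.1 = y.1 ∧ x.2 = !y.2)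

abbrev Reduced (L : List (Bool × Bool)) : Prop := List.Chain' NR L

def awd (z : ℤ) : List (Bool × Bool) := List.replicate z.natAbs (true, decide (0 < z))

lemma reduce_eq_self : ∀ {L : List (Bool × Bool)}, Reduced L → FreeGroup.reduce L = L := by
  intro L
  induction L with
  | nil => intro _; rfl
  | cons x L ih =>
    intro h
    have hL : Reduced L := h.tail
    rw [FreeGroup.reduce.cons, ih hL]
    cases L with
    | nil => rfl
    | cons y T =>
      have hrel : NR x y := (List.isChain_cons_cons.mp h).1
      simp only [NR] at hrel
      simp [hrel]

lemma reduced_reduce (L : List (Bool × Bool)) : Reduced (FreeGroup.reduce L) := by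
  induction L with
  | nil => exact List.isChain_nil
  | cons x L ih =>
    rw [FreeGroup.reduce.cons]
    cases h : FreeGroup.reduce L with
    | nil => exact List.isChain_singleton _
    | cons y T =>
      rw [h] at ih
      by_cases hc : x.1 = y.1 ∧ x.2 = !y.2
      · simp only [hc, if_true, and_self]
        exact ih.tail
      · simp only [hc, if_false]
        exact List.isChain_cons_cons.mpr ⟨hc, ih⟩

lemma reduced_toWord (x : FreeGroup Bool) : Reduced x.toWord := by
  rw [← FreeGroup.reduce_toWord]; exact reduced_reduce _

lemma toWord_mk_red {L : List (Bool × Bool)} (h : Reduced L) : (FreeGroup.mk L).toWord = L := by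
  rw [FreeGroup.toWord_mk, reduce_eq_self h]

lemma reduced_invRev {L : List (Bool × Bool)} (h : Reduced L) : Reduced (FreeGroup.invRev L) := by
  have : FreeGroup.reduce (FreeGroup.invRev L) = FreeGroup.invRev L := by
    rw [FreeGroup.reduce_invRev, reduce_eq_self h]
  rw [← this]; exact reduced_reduce _

lemma invRev_awd (z : ℤ) : FreeGroup.invRev (awd z) = awd (-z) := by
  unfold awd FreeGroup.invRev
  rw [List.map_replicate, List.reverse_replicate]
  rcases lt_trichotomy z 0 with h | h | h
  · simp [Int.natAbs_neg, h, not_lt_of_gt h, h.le, not_lt.mpr h.le]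
  · simp [h]
  · simp [Int.natAbs_neg, h, not_lt.mpr h.le]

lemma mk_awd (z : ℤ) : FreeGroup.mk (awd z) = (FreeGroup.of true) ^ z := by
  have key : ∀ n : ℕ, FreeGroup.mk (List.replicate n (true, true)) = (FreeGroup.of true) ^ n := by
    intro n
    induction n with
    | zero => simp [FreeGroup.one_eq_mk]
    | succ n ih =>
      rw [List.replicate_succ', pow_succ, ← ih, FreeGroup.of, FreeGroup.mul_mk]
  rcases lt_trichotomy z 0 with h | h | h
  · have h1 : awd z = FreeGroup.invRev (List.replicate z.natAbs (true, true)) := by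
      unfold awd FreeGroup.invRev
      rw [List.map_replicate, List.reverse_replicate]
      simp [not_lt.mpr h.le]
    rw [h1, ← FreeGroup.inv_mk, key]
    rw [← zpow_natCast, ← zpow_neg]
    congr 1
    omega
  · simp [h, awd, FreeGroup.one_eq_mk]
  · have h1 : awd z = List.replicate z.natAbs (true, true) := by simp [awd, h]
    rw [h1, key, ← zpow_natCast]
    congr 1
    omega

lemma reduced_awd (z : ℤ) : Reduced (awd z) := by
  unfold awd Reduced
  induction (z.natAbs) with
  | zero => exact List.isChain_nil
  | succ n ih =>
    rw [List.replicate_succ]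
    cases n with
    | zero => exact List.isChain_singleton _
    | succ k =>
      rw [List.replicate_succ]
      exact List.isChain_cons_cons.mpr ⟨by simp [NR], by rwa [List.replicate_succ] at ih⟩

lemma awd_fst {z : ℤ} {x : Bool × Bool} (h : x ∈ awd z) : x.1 = true := by
  unfold awd at h
  rw [List.eq_of_mem_replicate h]

lemma tw_append {p : Bool × Bool → Bool} {L M : List (Bool × Bool)}
    (h : ∀ x ∈ L, p x = true) : (L ++ M).takeWhile p = L ++ M.takeWhile p := by
  induction L with
  | nil => simp
  | cons x L ih =>
    simp only [List.cons_append, List.takeWhile_cons, h x (by simp)]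
    rw [ih (fun y hy => h y (by simp [hy]))]
    simp

lemma initExp_eq {p : ℤ} {M : List (Bool × Bool)} (hred : Reduced (awd p ++ M))
    (hM : ∀ x ∈ M.head?, x.1 = false) :
    initExp (FreeGroup.mk (awd p ++ M)) = p := by
  unfold initExp
  rw [toWord_mk_red hred]
  have h1 : (awd p ++ M).takeWhile (fun q => q.1) = awd p := by
    rw [tw_append (fun x hx => awd_fst hx)]
    have h2 : M.takeWhile (fun q => q.1) = [] := by
      cases M with
      | nil => rfl
      | cons x T =>
        have := hM x (by simp)
        simp [List.takeWhile_cons, this]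
    rw [h2, List.append_nil]
  rw [h1]
  unfold awd
  rw [List.map_replicate, List.sum_replicate]
  rcases lt_trichotomy p 0 with h | h | h
  · have hd : decide (0 < p) = false := by simp [not_lt.mpr h.le]
    rw [hd]
    simp only [Bool.false_eq_true, if_false, nsmul_eq_mul]
    omega
  · simp [h]
  · have hd : decide (0 < p) = true := by simp [h]
    rw [hd]
    simp only [if_true, nsmul_eq_mul]
    omega

lemma abs_initExp_le (w : FreeGroup Bool) : |initExp w| ≤ (w.toWord).length := by
  unfold initExp
  have key : ∀ l : List (Bool × Bool),
      |((l.map (fun p => if p.2 then (1 : ℤ) else -1)).sum)| ≤ l.length := by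
    intro l
    induction l with
    | nil => simp
    | cons x T ih =>
      simp only [List.map_cons, List.sum_cons, List.length_cons]
      have : |(if x.2 then (1:ℤ) else -1)| ≤ 1 := by split <;> simp
      calc |(if x.2 then (1:ℤ) else -1) + _| ≤ _ + _ := abs_add_le _ _
        _ ≤ 1 + T.length := add_le_add this ih
        _ = (T.length + 1 : ℕ) := by push_cast; ring
  calc |_| ≤ ((w.toWord.takeWhile (fun p => p.1)).length : ℤ) := key _
    _ ≤ _ := by exact_mod_cast (List.takeWhile_prefix _).length_le

lemma head?_awd {z : ℤ} (hz : z ≠ 0) : (awd z).head? = some (true, decide (0 < z)) := by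
  unfold awd
  have : z.natAbs ≠ 0 := by omega
  cases hn : z.natAbs with
  | zero => omega
  | succ n => rw [List.replicate_succ]; rfl

lemma awd_cons {p' : ℤ} {s : Bool} (hs : p' ≠ 0 → decide (0 < p') = s) :
    awd (p' + (if s then 1 else -1)) = (true, s) :: awd p' := by
  unfold awd
  by_cases hp : p' = 0
  · subst hp
    cases s <;> simp <;> rfl
  · have hd := hs hp
    cases s with
    | true =>
      have hpos : 0 < p' := by
        by_contra hc
        simp [hc] at hd
      have h1 : (p' + 1).natAbs = p'.natAbs + 1 := by omega
      have h2 : decide (0 < p' + (1:ℤ)) = true := by simp; omega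
      simp only [if_true, h1, h2, List.replicate_succ]
      congr 2
      simp [hpos]
    | false =>
      have hneg : p' < 0 := by
        rcases lt_trichotomy p' 0 with h | h | h
        · exact h
        · omega
        · simp [h] at hd
      have h1 : (p' + (-1)).natAbs = p'.natAbs + 1 := by omega
      have h2 : decide (0 < p' + (-1:ℤ)) = false := decide_eq_false (by omega)
      rw [if_neg (by simp : ¬((false:Bool) = true))]
      rw [h1, h2, List.replicate_succ, hd]

lemma run_eq : ∀ (L : List (Bool × Bool)), Reduced L →
    ∃ (p : ℤ) (M : List (Bool × Bool)), L = awd p ++ M ∧ ∀ x ∈ M.head?, x.1 = false := by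
  intro L
  induction L with
  | nil => exact fun _ => ⟨0, [], rfl, by simp⟩
  | cons x L ih =>
    intro h
    obtain ⟨x1, x2⟩ := x
    cases x1 with
    | false =>
      refine ⟨0, (false, x2) :: L, ?_, ?_⟩
      · simp [awd]
      · intro y hy; simp at hy; rw [← hy]
    | true =>
      obtain ⟨p', M, hLM, hM⟩ := ih h.tail
      have hs : p' ≠ 0 → decide (0 < p') = x2 := by
        intro hp
        have hhead : L.head? = some (true, decide (0 < p')) := by
          rw [hLM, List.head?_append, head?_awd hp]
          rfl
        have hrel : ∀ y ∈ L.head?, NR (true, x2) y := (List.isChain_cons.mp h).1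
        have h5 := hrel _ hhead
        by_contra hne
        apply h5
        refine ⟨rfl, ?_⟩
        show x2 = !decide (0 < p')
        revert hne; cases x2 <;> cases hdp : decide (0 < p') <;> simp
      refine ⟨p' + (if x2 then 1 else -1), M, ?_, hM⟩
      rw [awd_cons hs, List.cons_append, ← hLM]

lemma reduced_append {L₁ L₂ : List (Bool × Bool)} (h₁ : Reduced L₁) (h₂ : Reduced L₂)
    (h : ∀ x ∈ L₁.getLast?, ∀ y ∈ L₂.head?, x.1 ≠ y.1) : Reduced (L₁ ++ L₂) :=
  List.isChain_append.mpr ⟨h₁, h₂, fun x hx y hy hc => h x hx y hy hc.1⟩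

lemma awd_fst_head {z : ℤ} : ∀ x ∈ (awd z).head?, x.1 = true :=
  fun x hx => awd_fst (List.mem_of_mem_head? hx)

lemma awd_fst_last {z : ℤ} : ∀ x ∈ (awd z).getLast?, x.1 = true :=
  fun x hx => awd_fst (List.mem_of_mem_getLast? hx)

lemma invRev_append (L₁ L₂ : List (Bool × Bool)) :
    FreeGroup.invRev (L₁ ++ L₂) = FreeGroup.invRev L₂ ++ FreeGroup.invRev L₁ := by
  simp [FreeGroup.invRev]

lemma head?_invRev (L : List (Bool × Bool)) :
    (FreeGroup.invRev L).head? = L.getLast?.map (fun x => (x.1, !x.2)) := by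
  unfold FreeGroup.invRev
  rw [List.head?_reverse, List.getLast?_map]

lemma getLast?_invRev (L : List (Bool × Bool)) :
    (FreeGroup.invRev L).getLast? = L.head?.map (fun x => (x.1, !x.2)) := by
  unfold FreeGroup.invRev
  rw [List.getLast?_reverse, List.head?_map]

lemma awd_ne_nil {z : ℤ} (hz : z ≠ 0) : awd z ≠ [] := by
  unfold awd
  have : z.natAbs ≠ 0 := by omega
  simp [this]

lemma reduced_big {r z q : ℤ} {C D : List (Bool × Bool)} (hC : Reduced C) (hD : Reduced D)
    (hCne : C ≠ []) (hDne : D ≠ []) (hz : z ≠ 0)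
    (hCh : ∀ x ∈ C.head?, x.1 = false) (hCl : ∀ x ∈ C.getLast?, x.1 = false)
    (hDh : ∀ x ∈ D.head?, x.1 = false) (hDl : ∀ x ∈ D.getLast?, x.1 = false) :
    Reduced (awd r ++ (C ++ (awd z ++ (D ++ awd q)))) := by
  have hDq : Reduced (D ++ awd q) :=
    reduced_append hD (reduced_awd q)
      (fun x hx y hy => by rw [hDl x hx, awd_fst_head y hy]; simp)
  have hzDq : Reduced (awd z ++ (D ++ awd q)) := by
    refine reduced_append (reduced_awd z) hDq (fun x hx y hy => ?_)
    rw [List.head?_append_of_ne_nil _ hDne] at hy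
    rw [awd_fst_last x hx, hDh y hy]
    simp
  have hCzDq : Reduced (C ++ (awd z ++ (D ++ awd q))) := by
    refine reduced_append hC hzDq (fun x hx y hy => ?_)
    rw [List.head?_append_of_ne_nil _ (awd_ne_nil hz)] at hy
    rw [hCl x hx, awd_fst_head y hy]
    simp
  refine reduced_append (reduced_awd r) hCzDq (fun x hx y hy => ?_)
  rw [List.head?_append_of_ne_nil _ hCne] at hy
  rw [awd_fst_last x hx, hCh y hy]
  simp

lemma decompose (w : FreeGroup Bool) (hw : w ∉ Subgroup.zpowers (FreeGroup.of true)) :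
    ∃ (p q : ℤ) (C : List (Bool × Bool)), Reduced C ∧ C ≠ [] ∧
      (∀ x ∈ C.head?, x.1 = false) ∧ (∀ x ∈ C.getLast?, x.1 = false) ∧
      w = (FreeGroup.of true) ^ p * FreeGroup.mk C * (FreeGroup.of true) ^ q ∧
      initExp w = p ∧ initExp w⁻¹ = -q := by
  have hL : Reduced w.toWord := reduced_toWord w
  obtain ⟨p, M, hLM, hMh⟩ := run_eq _ hL
  have hMred : Reduced M := (List.isChain_append.mp (hLM ▸ hL)).2.1
  have hMne : M ≠ [] := by
    intro hM0
    apply hw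
    refine ⟨p, ?_⟩
    show (FreeGroup.of true) ^ p = w
    rw [← mk_awd, ← FreeGroup.mk_toWord (x := w), hLM, hM0, List.append_nil]
  obtain ⟨q', M₂, hM2, hM2h⟩ := run_eq _ (reduced_invRev hMred)
  have hM2red : Reduced M₂ := (List.isChain_append.mp (hM2 ▸ reduced_invRev hMred)).2.1
  have hM2ne : M₂ ≠ [] := by
    intro h0
    rw [h0, List.append_nil] at hM2
    have : M = awd (-q') := by
      rw [← FreeGroup.invRev_invRev (L₁ := M), hM2, invRev_awd]
    rcases eq_or_ne q' 0 with hq | hq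
    · rw [hq] at this; simp [awd] at this; exact hMne this
    · have hne : (-q') ≠ 0 := by omega
      have : M.head? = some (true, decide (0 < -q')) := by
        rw [this]
        unfold awd
        have : (-q').natAbs ≠ 0 := by omega
        cases hn : (-q').natAbs with
        | zero => omega
        | succ n => rw [List.replicate_succ]; rfl
      have := hMh _ this
      simp at this
  set C := FreeGroup.invRev M₂ with hCdef
  have hMC : M = C ++ awd (-q') := by
    rw [← FreeGroup.invRev_invRev (L₁ := M), hM2, _root_.invRev_append, invRev_awd]
  have hCne : C ≠ [] := by
    intro h0
    apply hM2ne
    have := congrArg FreeGroup.invRev h0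
    rwa [FreeGroup.invRev_invRev, FreeGroup.invRev_empty] at this
  have hCred : Reduced C := reduced_invRev hM2red
  have hCh : ∀ x ∈ C.head?, x.1 = false := by
    intro x hx
    apply hMh
    rw [hMC, List.head?_append_of_ne_nil _ hCne]
    exact hx
  have hCl : ∀ x ∈ C.getLast?, x.1 = false := by
    intro x hx
    rw [hCdef, getLast?_invRev] at hx
    cases hh : M₂.head? with
    | none => rw [hh] at hx; simp at hx
    | some y =>
      rw [hh] at hx
      have hxy : (y.1, !y.2) = x := by simpa using hx
      rw [← hxy]
      exact hM2h y (by rw [hh]; rfl)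
  refine ⟨p, -q', C, hCred, hCne, hCh, hCl, ?_, ?_, ?_⟩
  · rw [← mk_awd, ← mk_awd, FreeGroup.mul_mk, FreeGroup.mul_mk,
      ← FreeGroup.mk_toWord (x := w), hLM, hMC, List.append_assoc]
  · rw [← FreeGroup.mk_toWord (x := w), hLM]
    exact initExp_eq (hLM ▸ hL) hMh
  · have hinv : w⁻¹.toWord = awd q' ++ (M₂ ++ awd (-p)) := by
      rw [FreeGroup.toWord_inv, hLM, _root_.invRev_append, invRev_awd, hM2, List.append_assoc]
    have hredinv : Reduced (awd q' ++ (M₂ ++ awd (-p))) := by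
      rw [← hinv]; exact reduced_toWord _
    have : initExp w⁻¹ = q' := by
      rw [← FreeGroup.mk_toWord (x := w⁻¹), hinv]
      refine initExp_eq hredinv ?_
      intro x hx
      rw [List.head?_append_of_ne_nil _ hM2ne] at hx
      exact hM2h x hx
    omega

lemma head?_append_left {L M : List (Bool × Bool)} (hL : L ≠ [])
    (h : ∀ x ∈ L.head?, x.1 = false) : ∀ x ∈ (L ++ M).head?, x.1 = false := by
  rw [List.head?_append_of_ne_nil _ hL]; exact h

lemma initExp_mul {w₁ w₂ : FreeGroup Bool}
    (h₁ : w₁ ∉ Subgroup.zpowers (FreeGroup.of true))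
    (h₂ : w₂ ∉ Subgroup.zpowers (FreeGroup.of true))
    (hz : initExp w₂ ≠ initExp w₁⁻¹) :
    initExp (w₁ * w₂) = initExp w₁ := by
  obtain ⟨r, s, D, hDred, hDne, hDh, hDl, hw1, hie1, hie1'⟩ := decompose w₁ h₁
  obtain ⟨p, q, C, hCred, hCne, hCh, hCl, hw2, hie2, _⟩ := decompose w₂ h₂
  have hzne : s + p ≠ 0 := by
    rw [hie2] at hz; rw [hie1'] at hz; omega
  have hprod : w₁ * w₂ = FreeGroup.mk (awd r ++ (D ++ (awd (s + p) ++ (C ++ awd q)))) := by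
    rw [hw1, hw2]
    rw [← mk_awd, ← mk_awd, ← mk_awd, ← mk_awd]
    have hsp : FreeGroup.mk (awd s) * FreeGroup.mk (awd p) = FreeGroup.mk (awd (s+p)) := by
      rw [mk_awd, mk_awd, mk_awd, ← zpow_add]
    rw [← FreeGroup.mul_mk, ← FreeGroup.mul_mk, ← FreeGroup.mul_mk, ← FreeGroup.mul_mk, ← hsp]
    group
  rw [hprod, hie1]
  refine initExp_eq (reduced_big hDred hCred hDne hCne hzne hDh hDl hCh hCl) ?_
  exact head?_append_left hDne hDh

lemma vm_spec {m : ℕ} {v : FreeGroup Bool} (hv : v ∈ Vm m) :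
    v ∉ Subgroup.zpowers (FreeGroup.of true) ∧
    (m : ℤ) ≤ |initExp v| ∧ (m : ℤ) ≤ |initExp v⁻¹| := by
  obtain ⟨hvz, hnot⟩ := hv
  simp only [Set.mem_setOf_eq] at hvz
  rw [Set.mem_union] at hnot
  push_neg at hnot
  obtain ⟨hw, hwi⟩ := hnot
  refine ⟨hvz, ?_, ?_⟩
  · by_contra hc
    exact hw ⟨hvz, by omega⟩
  · by_contra hc
    apply hwi
    rw [Set.mem_inv]
    refine ⟨?_, by omega⟩
    intro hinv
    exact hvz ((Subgroup.zpowers (FreeGroup.of true)).inv_mem_iff.mp hinv)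


/-- Condition (H2) for the pair `⟨a⟩ < F₂`: for all `g₁, g₂ ∈ F \ ⟨a⟩` there is `m₁`
such that `g₁ V m ∩ V m g₂ = ∅` for every `m > m₁`. -/
theorem stmt_19 (g₁ g₂ : FreeGroup Bool)
    (h₁ : g₁ ∉ Subgroup.zpowers (FreeGroup.of true))
    (h₂ : g₂ ∉ Subgroup.zpowers (FreeGroup.of true)) :
    ∃ m₁ : ℕ, ∀ m : ℕ, m₁ < m →
      {x : FreeGroup Bool | ∃ v ∈ Vm m, x = g₁ * v} ∩
      {x : FreeGroup Bool | ∃ v ∈ Vm m, x = v * g₂} = ∅ := by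
  refine ⟨(FreeGroup.toWord g₁).length + (FreeGroup.toWord g₂).length, fun m hm => ?_⟩
  rw [Set.eq_empty_iff_forall_notMem]
  rintro x ⟨⟨v, hv, hxv⟩, ⟨u, hu, hxu⟩⟩
  obtain ⟨hvz, hv1, hv2⟩ := vm_spec hv
  obtain ⟨huz, hu1, hu2⟩ := vm_spec hu
  have hmZ : ((FreeGroup.toWord g₁).length : ℤ) + (FreeGroup.toWord g₂).length < (m : ℤ) := by
    exact_mod_cast hm
  have hb1 : |initExp g₁| ≤ ((FreeGroup.toWord g₁).length : ℤ) := abs_initExp_le g₁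
  have hb1' : |initExp g₁⁻¹| ≤ ((FreeGroup.toWord g₁).length : ℤ) := by
    have := abs_initExp_le g₁⁻¹
    rwa [FreeGroup.toWord_inv, FreeGroup.invRev_length] at this
  have hb2 : |initExp g₂| ≤ ((FreeGroup.toWord g₂).length : ℤ) := abs_initExp_le g₂
  have e1 : initExp (g₁ * v) = initExp g₁ := by
    refine initExp_mul h₁ hvz ?_
    intro heq
    rw [heq] at hv1
    have : ((FreeGroup.toWord g₁).length : ℤ) ≥ 0 := by positivity
    have : ((FreeGroup.toWord g₂).length : ℤ) ≥ 0 := by positivity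
    linarith
  have e2 : initExp (u * g₂) = initExp u := by
    refine initExp_mul huz h₂ ?_
    intro heq
    rw [← heq] at hu2
    have : ((FreeGroup.toWord g₁).length : ℤ) ≥ 0 := by positivity
    linarith
  have heq : g₁ * v = u * g₂ := by rw [← hxv, ← hxu]
  have : initExp g₁ = initExp u := by rw [← e1, heq, e2]
  rw [this] at hb1
  have : ((FreeGroup.toWord g₂).length : ℤ) ≥ 0 := by positivity
  linarith
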